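/- Let φ and φ̃ be two continuous boundary data on ∂D whose traces φ₁, φ₂ and φ̃₁, φ̃₂ are Lipschitz on [0,t̄], with corresponding parameters ζ and ζ̃, and assume ζ* := max(ζ, ζ̃) < 1. Let λ and λ̃ be the corresponding solutions of Q_φ(s,λ(s)) = 0 and Q_{φ̃}(s,λ̃(s)) = 0. Then for all s ∈ [0,t̄]: (1 − ζ*)·|λ̃(s) − λ(s)| ≤ 4‖γ‖∞·(‖φ̃₁ − φ₁‖∞ + ‖φ̃₂ − φ₂‖∞). In particular, if φ^j is a sequence of such data with ζ^j ≤ ζ* < 1 and ‖φ₁^j − φ₁‖∞, ‖φ₂^j − φ₂‖∞ → 0, then λ^j → λ uniformly on [0,t̄]. -/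

import Mathlib

open Set Filter

noncomputable section

/-- `Q_ψ(s,λ) = λ - s + 2(γ₂(λ) - γ₁(s))(ψ₂(λ) + ψ₁(s))` from the paper. -/
def Qphi (γ₁ γ₂ ψ₁ ψ₂ : ℝ → ℝ) (s l : ℝ) : ℝ :=
  l - s + 2 * (γ₂ l - γ₁ s) * (ψ₂ l + ψ₁ s)

set_option maxHeartbeats 1000000 in
/-- Key quantitative stability estimate for solutions of `Qphi = 0`. -/
lemma key_stab (tb : ℝ) (γ₁ γ₂ : ℝ → ℝ) (Mγ Lγ : NNReal)
    (hγ₂lip : LipschitzOnWith Lγ γ₂ (Set.Icc 0 tb))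
    (hγ₁bd : ∀ s ∈ Set.Icc 0 tb, |γ₁ s| ≤ (Mγ : ℝ))
    (hγ₂bd : ∀ s ∈ Set.Icc 0 tb, |γ₂ s| ≤ (Mγ : ℝ))
    (φ₁ φ₂ ψ₁ ψ₂ : ℝ → ℝ) (Mφ Lφ : NNReal)
    (hφ₂lip : LipschitzOnWith Lφ φ₂ (Set.Icc 0 tb))
    (hφ₁bd : ∀ s ∈ Set.Icc 0 tb, |φ₁ s| ≤ (Mφ : ℝ))
    (hφ₂bd : ∀ s ∈ Set.Icc 0 tb, |φ₂ s| ≤ (Mφ : ℝ))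
    (zstar : ℝ) (hz : 4 * ((Mγ : ℝ) + (Lγ : ℝ)) * ((Mφ : ℝ) + (Lφ : ℝ)) ≤ zstar)
    (d₁ d₂ : ℝ)
    (hd₁ : ∀ s ∈ Set.Icc 0 tb, |ψ₁ s - φ₁ s| ≤ d₁)
    (hd₂ : ∀ s ∈ Set.Icc 0 tb, |ψ₂ s - φ₂ s| ≤ d₂)
    (s l lt : ℝ) (hs : s ∈ Set.Icc 0 tb) (hl : l ∈ Set.Icc 0 tb)
    (hlt : lt ∈ Set.Icc 0 tb)
    (hQ : Qphi γ₁ γ₂ φ₁ φ₂ s l = 0) (hQt : Qphi γ₁ γ₂ ψ₁ ψ₂ s lt = 0) :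
    (1 - zstar) * |lt - l| ≤ 4 * (Mγ : ℝ) * (d₁ + d₂) := by
  unfold Qphi at hQ hQt
  set A : ℝ := γ₂ lt - γ₁ s with hA_def
  set B : ℝ := γ₂ l - γ₁ s with hB_def
  set u : ℝ := ψ₂ lt + ψ₁ s with hu_def
  set w : ℝ := φ₂ lt + φ₁ s with hw_def
  have hA : |A| ≤ 2 * (Mγ : ℝ) := by
    calc |A| ≤ |γ₂ lt| + |γ₁ s| := abs_sub _ _
      _ ≤ (Mγ : ℝ) + (Mγ : ℝ) := add_le_add (hγ₂bd lt hlt) (hγ₁bd s hs)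
      _ = 2 * (Mγ : ℝ) := by ring
  have hB : |B| ≤ 2 * (Mγ : ℝ) := by
    calc |B| ≤ |γ₂ l| + |γ₁ s| := abs_sub _ _
      _ ≤ (Mγ : ℝ) + (Mγ : ℝ) := add_le_add (hγ₂bd l hl) (hγ₁bd s hs)
      _ = 2 * (Mγ : ℝ) := by ring
  have hw : |w| ≤ 2 * (Mφ : ℝ) := by
    calc |w| ≤ |φ₂ lt| + |φ₁ s| := abs_add_le _ _
      _ ≤ (Mφ : ℝ) + (Mφ : ℝ) := add_le_add (hφ₂bd lt hlt) (hφ₁bd s hs)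
      _ = 2 * (Mφ : ℝ) := by ring
  have huw : |u - w| ≤ d₁ + d₂ := by
    have : u - w = (ψ₁ s - φ₁ s) + (ψ₂ lt - φ₂ lt) := by rw [hu_def, hw_def]; ring
    rw [this]
    calc |(ψ₁ s - φ₁ s) + (ψ₂ lt - φ₂ lt)| ≤ |ψ₁ s - φ₁ s| + |ψ₂ lt - φ₂ lt| :=
          abs_add_le _ _
      _ ≤ d₁ + d₂ := add_le_add (hd₁ s hs) (hd₂ lt hlt)
  have hγlip : |γ₂ lt - γ₂ l| ≤ (Lγ : ℝ) * |lt - l| := by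
    have := hγ₂lip.dist_le_mul lt hlt l hl
    simpa [Real.dist_eq] using this
  have hφlip : |φ₂ lt - φ₂ l| ≤ (Lφ : ℝ) * |lt - l| := by
    have := hφ₂lip.dist_le_mul lt hlt l hl
    simpa [Real.dist_eq] using this
  have heq : lt - l =
      (-2) * (A * (u - w)) + (-2) * ((γ₂ lt - γ₂ l) * w)
        + (-2) * (B * (φ₂ lt - φ₂ l)) := by
    rw [hA_def, hB_def, hu_def, hw_def]
    linear_combination hQt - hQ
  have habs : |lt - l| ≤ 2 * (|A| * |u - w|) + 2 * (|γ₂ lt - γ₂ l| * |w|)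
      + 2 * (|B| * |φ₂ lt - φ₂ l|) := by
    rw [heq]
    refine (abs_add_three _ _ _).trans (le_of_eq ?_)
    simp only [abs_mul, abs_neg, abs_two]
  have hdnn : (0 : ℝ) ≤ d₁ + d₂ := le_trans (abs_nonneg _) huw
  have t1 : 2 * (|A| * |u - w|) ≤ 4 * (Mγ : ℝ) * (d₁ + d₂) := by
    have := mul_le_mul hA huw (abs_nonneg _) (by positivity)
    nlinarith
  have t2 : 2 * (|γ₂ lt - γ₂ l| * |w|) ≤ 4 * (Lγ : ℝ) * (Mφ : ℝ) * |lt - l| := by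
    have := mul_le_mul hγlip hw (abs_nonneg _) (by positivity)
    nlinarith
  have t3 : 2 * (|B| * |φ₂ lt - φ₂ l|) ≤ 4 * (Mγ : ℝ) * (Lφ : ℝ) * |lt - l| := by
    have := mul_le_mul hB hφlip (abs_nonneg _) (by positivity)
    nlinarith
  have hzz : 4 * (Lγ : ℝ) * (Mφ : ℝ) + 4 * (Mγ : ℝ) * (Lφ : ℝ) ≤ zstar := by
    nlinarith [Mγ.coe_nonneg, Lγ.coe_nonneg, Mφ.coe_nonneg, Lφ.coe_nonneg]
  have hmul := mul_le_mul_of_nonneg_right hzz (abs_nonneg (lt - l))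
  nlinarith [abs_nonneg (lt - l)]

/-- stability of the reparametrization `λ` with respect to the boundary
datum, and uniform convergence `λ^j → λ` for approximating data. -/
theorem stmt_3 (tb : ℝ) (htb : 0 < tb)
    (γ₁ γ₂ : ℝ → ℝ) (Mγ Lγ : NNReal)
    (hγ₁lip : LipschitzOnWith Lγ γ₁ (Set.Icc 0 tb))
    (hγ₂lip : LipschitzOnWith Lγ γ₂ (Set.Icc 0 tb))
    (hγ₁bd : ∀ s ∈ Set.Icc 0 tb, |γ₁ s| ≤ (Mγ : ℝ))
    (hγ₂bd : ∀ s ∈ Set.Icc 0 tb, |γ₂ s| ≤ (Mγ : ℝ))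
    (hsign : ∀ t ∈ Set.Ioo 0 tb, γ₁ t < 0 ∧ 0 < γ₂ t)
    (hγ₁0 : γ₁ 0 = 0) (hγ₁t : γ₁ tb = 0) (hγ₂0 : γ₂ 0 = 0) (hγ₂t : γ₂ tb = 0)
    -- the datum φ with its parameter ζ
    (φ₁ φ₂ : ℝ → ℝ) (Mφ Lφ : NNReal)
    (hφ₁lip : LipschitzOnWith Lφ φ₁ (Set.Icc 0 tb))
    (hφ₂lip : LipschitzOnWith Lφ φ₂ (Set.Icc 0 tb))
    (hφ₁bd : ∀ s ∈ Set.Icc 0 tb, |φ₁ s| ≤ (Mφ : ℝ))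
    (hφ₂bd : ∀ s ∈ Set.Icc 0 tb, |φ₂ s| ≤ (Mφ : ℝ))
    (hφ0 : φ₁ 0 = φ₂ 0) (hφt : φ₁ tb = φ₂ tb)
    -- the datum φ̃ with its parameter ζ̃
    (φt₁ φt₂ : ℝ → ℝ) (Mφt Lφt : NNReal)
    (hφt₁lip : LipschitzOnWith Lφt φt₁ (Set.Icc 0 tb))
    (hφt₂lip : LipschitzOnWith Lφt φt₂ (Set.Icc 0 tb))
    (hφt₁bd : ∀ s ∈ Set.Icc 0 tb, |φt₁ s| ≤ (Mφt : ℝ))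
    (hφt₂bd : ∀ s ∈ Set.Icc 0 tb, |φt₂ s| ≤ (Mφt : ℝ))
    (hφt0 : φt₁ 0 = φt₂ 0) (hφtt : φt₁ tb = φt₂ tb)
    -- ζ* = max(ζ, ζ̃) < 1
    (zstar : ℝ)
    (hzstar : zstar = max (4 * ((Mγ : ℝ) + (Lγ : ℝ)) * ((Mφ : ℝ) + (Lφ : ℝ)))
        (4 * ((Mγ : ℝ) + (Lγ : ℝ)) * ((Mφt : ℝ) + (Lφt : ℝ))))
    (hzstar1 : zstar < 1)
    -- the two reparametrizations
    (lam lamt : ℝ → ℝ)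
    (hlam_bij : Set.BijOn lam (Set.Icc 0 tb) (Set.Icc 0 tb))
    (hlam_mono : StrictMonoOn lam (Set.Icc 0 tb))
    (hlam_sol : ∀ s ∈ Set.Icc 0 tb, Qphi γ₁ γ₂ φ₁ φ₂ s (lam s) = 0)
    (hlam0 : lam 0 = 0) (hlamt : lam tb = tb)
    (hlamt_bij : Set.BijOn lamt (Set.Icc 0 tb) (Set.Icc 0 tb))
    (hlamt_mono : StrictMonoOn lamt (Set.Icc 0 tb))
    (hlamt_sol : ∀ s ∈ Set.Icc 0 tb, Qphi γ₁ γ₂ φt₁ φt₂ s (lamt s) = 0)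
    (hlamt0 : lamt 0 = 0) (hlamtt : lamt tb = tb) :
    -- quantitative stability estimate
    (∀ d₁ d₂ : ℝ, (∀ s ∈ Set.Icc 0 tb, |φt₁ s - φ₁ s| ≤ d₁) →
      (∀ s ∈ Set.Icc 0 tb, |φt₂ s - φ₂ s| ≤ d₂) →
      ∀ s ∈ Set.Icc 0 tb,
        (1 - zstar) * |lamt s - lam s| ≤ 4 * (Mγ : ℝ) * (d₁ + d₂)) ∧
    -- uniform convergence of the reparametrizations for approximating data
    (∀ (fj₁ fj₂ : ℕ → ℝ → ℝ) (Mj Lj : ℕ → NNReal) (lamj : ℕ → ℝ → ℝ),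
      (∀ j, LipschitzOnWith (Lj j) (fj₁ j) (Set.Icc 0 tb)) →
      (∀ j, LipschitzOnWith (Lj j) (fj₂ j) (Set.Icc 0 tb)) →
      (∀ j, ∀ s ∈ Set.Icc 0 tb, |fj₁ j s| ≤ (Mj j : ℝ)) →
      (∀ j, ∀ s ∈ Set.Icc 0 tb, |fj₂ j s| ≤ (Mj j : ℝ)) →
      (∀ j, fj₁ j 0 = fj₂ j 0) → (∀ j, fj₁ j tb = fj₂ j tb) →
      (∀ j, 4 * ((Mγ : ℝ) + (Lγ : ℝ)) * ((Mj j : ℝ) + (Lj j : ℝ)) ≤ zstar) →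
      (∀ j, Set.BijOn (lamj j) (Set.Icc 0 tb) (Set.Icc 0 tb)) →
      (∀ j, StrictMonoOn (lamj j) (Set.Icc 0 tb)) →
      (∀ j, ∀ s ∈ Set.Icc 0 tb, Qphi γ₁ γ₂ (fj₁ j) (fj₂ j) s (lamj j s) = 0) →
      (∀ j, lamj j 0 = 0) → (∀ j, lamj j tb = tb) →
      TendstoUniformlyOn fj₁ φ₁ atTop (Set.Icc 0 tb) →
      TendstoUniformlyOn fj₂ φ₂ atTop (Set.Icc 0 tb) →
      TendstoUniformlyOn lamj lam atTop (Set.Icc 0 tb)) := by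
  have hzφ : 4 * ((Mγ : ℝ) + (Lγ : ℝ)) * ((Mφ : ℝ) + (Lφ : ℝ)) ≤ zstar := by
    rw [hzstar]; exact le_max_left _ _
  constructor
  · intro d₁ d₂ hd₁ hd₂ s hs
    exact key_stab tb γ₁ γ₂ Mγ Lγ hγ₂lip hγ₁bd hγ₂bd φ₁ φ₂ φt₁ φt₂ Mφ Lφ
      hφ₂lip hφ₁bd hφ₂bd zstar hzφ d₁ d₂ hd₁ hd₂ s (lam s) (lamt s) hs
      (hlam_bij.mapsTo hs) (hlamt_bij.mapsTo hs) (hlam_sol s hs) (hlamt_sol s hs)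
  · intro fj₁ fj₂ Mj Lj lamj hj₁lip hj₂lip hj₁bd hj₂bd hj0 hjt hjz hjbij hjmono
      hjsol hj00 hjtbt hconv₁ hconv₂
    rw [Metric.tendstoUniformlyOn_iff] at hconv₁ hconv₂ ⊢
    intro ε hε
    have h1z : (0 : ℝ) < 1 - zstar := by linarith
    set ε' : ℝ := (1 - zstar) * ε / (2 * (8 * (Mγ : ℝ) + 1)) with hε'_def
    have hε' : 0 < ε' := by positivity
    filter_upwards [hconv₁ ε' hε', hconv₂ ε' hε'] with j h1 h2 s hs
    have key := key_stab tb γ₁ γ₂ Mγ Lγ hγ₂lip hγ₁bd hγ₂bd φ₁ φ₂ (fj₁ j) (fj₂ j)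
      Mφ Lφ hφ₂lip hφ₁bd hφ₂bd zstar hzφ ε' ε'
      (fun x hx => by
        have := h1 x hx
        rw [Real.dist_eq, abs_sub_comm] at this
        exact this.le)
      (fun x hx => by
        have := h2 x hx
        rw [Real.dist_eq, abs_sub_comm] at this
        exact this.le)
      s (lam s) (lamj j s) hs (hlam_bij.mapsTo hs) ((hjbij j).mapsTo hs)
      (hlam_sol s hs) (hjsol j s hs)
    rw [Real.dist_eq]
    have hMγ : (0 : ℝ) ≤ Mγ := Mγ.coe_nonneg
    have h8 : 4 * (Mγ : ℝ) * (ε' + ε') ≤ (8 * (Mγ : ℝ) + 1) * ε' := by nlinarith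
    have hε'' : (8 * (Mγ : ℝ) + 1) * ε' = (1 - zstar) * ε / 2 := by
      rw [hε'_def]; field_simp
    have habs : |lam s - lamj j s| = |lamj j s - lam s| := abs_sub_comm _ _
    rw [habs]
    have hlt : (1 - zstar) * |lamj j s - lam s| < (1 - zstar) * ε := by
      calc (1 - zstar) * |lamj j s - lam s| ≤ 4 * (Mγ : ℝ) * (ε' + ε') := key
        _ ≤ (8 * (Mγ : ℝ) + 1) * ε' := h8
        _ = (1 - zstar) * ε / 2 := hε''
        _ < (1 - zstar) * ε := by linarith [mul_pos h1z hε]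
    exact lt_of_mul_lt_mul_left (by linarith) h1z.le
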